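/- Let $g: [-1,1] \to [0,\infty)$ with $g(0) = 0$, and let $E$ be an exchange matrix. Define $K = g(E^s)$ via the spectral calculus on the standardized exchange matrix $E^s$, $B = \Pi^{-1/2} K \Pi^{-1/2}$, and $D_{ij} = B_{ii} + B_{jj} - 2B_{ij}$. Then $D$ is a squared Euclidean distance (i.e. there exist points $y_1,\dots,y_n$ in some Euclidean space with $D_{ij} = \|y_i - y_j\|^2$), and $D_{ij} = 0$ whenever vertices $i$ and $j$ are equivalent ($e_{ik}/f_i = e_{jk}/f_j$ for all $k$). -/

import Mathlib

open BigOperators Matrix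

/-- Focused squared Euclidean distances on weighted graphs: for nonnegative `g`
with `g(0) = 0`, the distance built from `K = g(E^s)` (spectral calculus) is a
squared Euclidean distance, vanishing between equivalent vertices. -/
theorem focused_distance_euclidean {n : ℕ}
    (E : Matrix (Fin n) (Fin n) ℝ) (hsym : E.IsSymm)
    (hnn : ∀ i j, 0 ≤ E i j) (hsum : ∑ i, ∑ j, E i j = 1)
    (f : Fin n → ℝ) (hf : ∀ i, f i = ∑ j, E i j) (hfpos : ∀ i, 0 < f i)
    (Es : Matrix (Fin n) (Fin n) ℝ)
    (hEs : ∀ i j, Es i j = (E i j - f i * f j) / Real.sqrt (f i * f j))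
    -- spectral decomposition of `E^s`:
    (lam : Fin n → ℝ) (u : Fin n → Fin n → ℝ)
    (horth : ∀ α β, ∑ k, u α k * u β k = if α = β then (1 : ℝ) else 0)
    (hdecomp : Es = ∑ α, lam α • Matrix.vecMulVec (u α) (u α))
    (hspec : ∀ α, -1 ≤ lam α ∧ lam α ≤ 1)
    -- the function `g`:
    (g : ℝ → ℝ) (hg0 : g 0 = 0) (hgnn : ∀ x, -1 ≤ x → x ≤ 1 → 0 ≤ g x)
    (K : Matrix (Fin n) (Fin n) ℝ)
    (hK : K = ∑ α, g (lam α) • Matrix.vecMulVec (u α) (u α))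
    (B : Matrix (Fin n) (Fin n) ℝ)
    (hB : B = Matrix.diagonal (fun i => (Real.sqrt (f i))⁻¹) * K *
      Matrix.diagonal (fun i => (Real.sqrt (f i))⁻¹))
    (D : Fin n → Fin n → ℝ)
    (hD : ∀ i j, D i j = B i i + B j j - 2 * B i j) :
    (∃ (q : ℕ) (y : Fin n → EuclideanSpace ℝ (Fin q)),
      ∀ i j, D i j = ‖y i - y j‖ ^ 2) ∧
    (∀ i j, i ≠ j → (∀ k, E i k / f i = E j k / f j) → D i j = 0) := by
  have hfnn : ∀ i, 0 ≤ f i := fun i => (hfpos i).le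
  have hsqpos : ∀ i, 0 < Real.sqrt (f i) := fun i => Real.sqrt_pos.mpr (hfpos i)
  have hsqne : ∀ i, Real.sqrt (f i) ≠ 0 := fun i => ne_of_gt (hsqpos i)
  have hgnn' : ∀ α, 0 ≤ g (lam α) := fun α => hgnn _ (hspec α).1 (hspec α).2
  set y : Fin n → EuclideanSpace ℝ (Fin n) :=
    fun i => WithLp.toLp 2 (fun α => Real.sqrt (g (lam α)) * u α i / Real.sqrt (f i)) with hy
  -- K entrywise
  have hKe : ∀ a b, K a b = ∑ α, g (lam α) * (u α a * u α b) := by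
    intro a b
    rw [hK]
    simp [Matrix.sum_apply, Matrix.vecMulVec_apply]
  -- B entrywise as inner products
  have hBij : ∀ i j, B i j = ∑ α, y i α * y j α := by
    intro i j
    rw [hB]
    rw [Matrix.mul_apply, Finset.sum_congr rfl
      (fun k _ => by rw [Matrix.diagonal_mul])]
    have : ∀ k, (Real.sqrt (f i))⁻¹ * K i k *
        Matrix.diagonal (fun i => (Real.sqrt (f i))⁻¹) k j
        = if k = j then (Real.sqrt (f i))⁻¹ * K i j * (Real.sqrt (f j))⁻¹ else 0 := by
      intro k
      by_cases hk : k = j <;> simp [Matrix.diagonal, hk]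
    rw [Finset.sum_congr rfl (fun k _ => this k), Finset.sum_ite_eq']
    simp only [Finset.mem_univ, if_true]
    rw [hKe, Finset.mul_sum, Finset.sum_mul]
    refine Finset.sum_congr rfl (fun α _ => ?_)
    simp only [hy]
    rw [div_mul_div_comm, mul_mul_mul_comm,
      Real.mul_self_sqrt (hgnn' α)]
    field_simp
  -- D as squared norm
  have hnorm : ∀ i j, D i j = ‖y i - y j‖ ^ 2 := by
    intro i j
    rw [EuclideanSpace.norm_eq, Real.sq_sqrt (by positivity)]
    have hsub : ∀ α, ‖(y i - y j) α‖ ^ 2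
        = y i α * y i α + y j α * y j α - 2 * (y i α * y j α) := by
      intro α
      have : (y i - y j) α = y i α - y j α := rfl
      rw [this, Real.norm_eq_abs, sq_abs]
      ring
    rw [Finset.sum_congr rfl (fun α _ => hsub α)]
    rw [hD, hBij, hBij, hBij]
    rw [Finset.sum_sub_distrib, Finset.sum_add_distrib, ← Finset.mul_sum]
  refine ⟨⟨n, y, hnorm⟩, ?_⟩
  intro i j _ heq
  -- Es entrywise from the spectral decomposition
  have hEsk : ∀ a b, Es a b = ∑ α, lam α * (u α a * u α b) := by
    intro a b
    rw [hdecomp]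
    simp [Matrix.sum_apply, Matrix.vecMulVec_apply]
  -- equivalence transfers to rows of Es scaled by 1/√f
  have hEsdiv : ∀ k, Es i k / Real.sqrt (f i) = Es j k / Real.sqrt (f j) := by
    intro k
    rw [hEs, hEs, Real.sqrt_mul (hfnn i), Real.sqrt_mul (hfnn j)]
    have h' : E i k * f j = E j k * f i := by
      have h := heq k
      rw [div_eq_div_iff (ne_of_gt (hfpos i)) (ne_of_gt (hfpos j))] at h
      exact h
    rw [div_div, div_div]
    rw [div_eq_div_iff
      (ne_of_gt (mul_pos (mul_pos (hsqpos i) (hsqpos k)) (hsqpos i)))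
      (ne_of_gt (mul_pos (mul_pos (hsqpos j) (hsqpos k)) (hsqpos j)))]
    have hi : Real.sqrt (f i) * Real.sqrt (f i) = f i := Real.mul_self_sqrt (hfnn i)
    have hj : Real.sqrt (f j) * Real.sqrt (f j) = f j := Real.mul_self_sqrt (hfnn j)
    linear_combination (E i k - f i * f k) * Real.sqrt (f k) * hj -
      (E j k - f j * f k) * Real.sqrt (f k) * hi + Real.sqrt (f k) * h'
  -- key eigen-relation
  have key : ∀ (a : Fin n) β,
      ∑ k, (Es a k / Real.sqrt (f a)) * u β k = lam β * (u β a / Real.sqrt (f a)) := by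
    intro a β
    have step : ∀ k, Es a k / Real.sqrt (f a) * u β k
        = ∑ α, (lam α * (u α a / Real.sqrt (f a))) * (u α k * u β k) := by
      intro k
      rw [hEsk a k, Finset.sum_div, Finset.sum_mul]
      exact Finset.sum_congr rfl (fun α _ => by ring)
    rw [Finset.sum_congr rfl (fun k _ => step k), Finset.sum_comm]
    have : ∀ α, ∑ k, (lam α * (u α a / Real.sqrt (f a))) * (u α k * u β k)
        = (lam α * (u α a / Real.sqrt (f a))) * (if α = β then (1:ℝ) else 0) := by
      intro α
      rw [← Finset.mul_sum, horth]
    rw [Finset.sum_congr rfl (fun α _ => this α)]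
    simp [Finset.sum_ite_eq']
  have hkey : ∀ β, lam β * (u β i / Real.sqrt (f i)) = lam β * (u β j / Real.sqrt (f j)) := by
    intro β
    rw [← key i β, ← key j β]
    exact Finset.sum_congr rfl (fun k _ => by rw [hEsdiv k])
  have hyij : y i = y j := by
    ext β
    simp only [hy]
    by_cases hβ : lam β = 0
    · simp [hβ, hg0]
    · have := mul_left_cancel₀ hβ (hkey β)
      rw [mul_div_assoc, mul_div_assoc, this]
  rw [hnorm i j, hyij]
  simp
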